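/- Fix a nonzero a ∈ F, d ∈ ℕ, and set θ_i = a q^{d-2i} + a⁻¹ q^{2i-d} for 0 ≤ i ≤ d. Then for 0 ≤ i, j ≤ d and every natural number n > |i - j|, the scalar ((θ_i - θ_j)/(q - q⁻¹)) · ∏_{r=1}^{n-1} (((q^{2r} - q^{-2r})² + (q^r θ_i - q^{-r} θ_j)(q^{-r} θ_i - q^r θ_j)) / ((q^{2r} - q^{-2r})(q^{2r+1} - q^{-2r-1}))) equals zero. -/
import Mathlib


open Finset

variable {F : Type*} [Field F] {A : Type*} [Ring A] [Algebra F A]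

/-- The quantum adjoint map `ad_r a : x ↦ q^r a x - q^{-r} x a`. -/
noncomputable def qad (q : F) (a : A) (r : ℤ) (x : A) : A :=
  q ^ r • (a * x) - q ^ (-r) • (x * a)

/-- `bad_m a` : the balanced version of `ad`. -/
noncomputable def bad (q : F) (a : A) : ℕ → A → A
  | 0, x => (q - q⁻¹)⁻¹ • qad q a 0 x
  | (m + 1), x =>
      (((q ^ (2 * (m + 1) : ℤ) - q ^ (-(2 * (m + 1)) : ℤ)) *
          (q ^ (2 * (m + 1) + 1 : ℤ) - q ^ (-(2 * (m + 1)) - 1 : ℤ)))⁻¹) •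
        ((q ^ (2 * (m + 1) : ℤ) - q ^ (-(2 * (m + 1)) : ℤ)) ^ 2 • x +
          qad q a ((m : ℤ) + 1) (qad q a (-((m : ℤ) + 1)) x))

/-- `(bad a)_m = bad_{m-1} a ∘ ⋯ ∘ bad_0 a`, with `(bad a)_0 = id`. -/
noncomputable def badProd (q : F) (a : A) : ℕ → A → A
  | 0 => id
  | (m + 1) => bad q a m ∘ badProd q a m

/-- `S_m = (bad a)_m ∘ (ad_m a) / (q^{2m} - q^{-2m})`, with `S_0 = id`. -/
noncomputable def Smap (q : F) (a : A) : ℕ → A → A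
  | 0 => id
  | (m + 1) => fun x =>
      (q ^ (2 * (m + 1) : ℤ) - q ^ (-(2 * (m + 1)) : ℤ))⁻¹ •
        badProd q a (m + 1) (qad q a ((m : ℤ) + 1) x)

/-- `S'_m = (bad a)_m ∘ (ad_{-m} a) / (q^{2m} - q^{-2m})`, with `S'_0 = id`. -/
noncomputable def Smap' (q : F) (a : A) : ℕ → A → A
  | 0 => id
  | (m + 1) => fun x =>
      (q ^ (2 * (m + 1) : ℤ) - q ^ (-(2 * (m + 1)) : ℤ))⁻¹ •
        badProd q a (m + 1) (qad q a (-((m : ℤ) + 1)) x)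

lemma key_num {F : Type*} [Field F] (a x y t : F) (ha : a ≠ 0) (hx : x ≠ 0) (hy : y ≠ 0)
    (ht : t ≠ 0) (h : x = y * t⁻¹ * t⁻¹ ∨ y = x * t⁻¹ * t⁻¹) :
    (t ^ 2 - (t ^ 2)⁻¹) ^ 2 +
      (t * (a * x + a⁻¹ * x⁻¹) - t⁻¹ * (a * y + a⁻¹ * y⁻¹)) *
        (t⁻¹ * (a * x + a⁻¹ * x⁻¹) - t * (a * y + a⁻¹ * y⁻¹)) = 0 := by
  have h2 : t ^ 2 ≠ 0 := pow_ne_zero _ ht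
  rcases h with h | h <;> subst h <;>
    rw [mul_inv, mul_inv] <;> field_simp <;> ring_nf <;> field_simp <;> ring

theorem stmt17 (q : F) (hq : q ≠ 0) (hroot : ∀ n : ℕ, 0 < n → q ^ n ≠ 1) (a : F) (ha : a ≠ 0) (d : ℕ)
    (θ : ℕ → F)
    (hθ : ∀ i, θ i = a * q ^ ((d : ℤ) - 2 * i) + a⁻¹ * q ^ (2 * (i : ℤ) - d))
    (i j : ℕ) (hi : i ≤ d) (hj : j ≤ d) (n : ℕ) (hn : ((i : ℤ) - j).natAbs < n) :
    (θ i - θ j) / (q - q⁻¹) *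
      (∏ r ∈ Finset.Icc 1 (n - 1),
        ((q ^ (2 * (r : ℤ)) - q ^ (-(2 * (r : ℤ)))) ^ 2 +
            (q ^ (r : ℤ) * θ i - q ^ (-(r : ℤ)) * θ j) * (q ^ (-(r : ℤ)) * θ i - q ^ (r : ℤ) * θ j)) /
          ((q ^ (2 * (r : ℤ)) - q ^ (-(2 * (r : ℤ)))) * (q ^ (2 * (r : ℤ) + 1) - q ^ (-(2 * (r : ℤ)) - 1)))) = 0 := by
  rcases eq_or_ne i j with hij | hij
  · subst hij; simp
  · apply mul_eq_zero_of_right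
    set r0 : ℕ := ((i : ℤ) - j).natAbs with hr0
    apply Finset.prod_eq_zero (i := r0) (by rw [Finset.mem_Icc]; omega)
    set x := q ^ ((d : ℤ) - 2 * i) with hx
    set y := q ^ ((d : ℤ) - 2 * j) with hy
    set t := q ^ (r0 : ℤ) with ht
    have hxne : x ≠ 0 := zpow_ne_zero _ hq
    have hyne : y ≠ 0 := zpow_ne_zero _ hq
    have htne : t ≠ 0 := zpow_ne_zero _ hq
    have e2 : q ^ (2 * (r0 : ℤ)) = t ^ 2 := by
      rw [sq, ht, ← zpow_add₀ hq]; congr 1; ring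
    have en : q ^ (-(r0 : ℤ)) = t⁻¹ := by rw [ht, zpow_neg]
    have en2 : q ^ (-(2 * (r0 : ℤ))) = (t ^ 2)⁻¹ := by rw [zpow_neg, e2]
    have hθi : θ i = a * x + a⁻¹ * x⁻¹ := by
      have h1 : (2 * (i : ℤ) - d) = -((d : ℤ) - 2 * i) := by ring
      rw [hθ i, h1, zpow_neg, hx]
    have hθj : θ j = a * y + a⁻¹ * y⁻¹ := by
      have h1 : (2 * (j : ℤ) - d) = -((d : ℤ) - 2 * j) := by ring
      rw [hθ j, h1, zpow_neg, hy]
    have hrel : x = y * t⁻¹ * t⁻¹ ∨ y = x * t⁻¹ * t⁻¹ := by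
      rcases le_or_gt j i with hle | hlt
      · left
        rw [hx, hy, ht, ← zpow_neg, ← zpow_add₀ hq, ← zpow_add₀ hq]
        congr 1
        omega
      · right
        rw [hx, hy, ht, ← zpow_neg, ← zpow_add₀ hq, ← zpow_add₀ hq]
        congr 1
        omega
    rw [hθi, hθj, e2, en2, en, key_num a x y t ha hxne hyne htne hrel, zero_div]
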